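/- arXiv:2210.11611 — 2 statements merged into one kernel-verified Lean document; each statement's English description precedes it below -/
import Mathlib

section
/- In the parsimonious bivariate Matérn model, the constraint on the colocated cross-correlation ρ12 = β12 · [Γ(ν11 + d/2)^{1/2}/Γ(ν11)^{1/2}] · [Γ(ν22 + d/2)^{1/2}/Γ(ν22)^{1/2}] · [Γ(ν12)/Γ(ν12 + d/2)] with ν12 = (ν11 + ν22)/2 and |β12| ≤ 1 implies |ρ12| ≤ 1, with equality |ρ12| = 1 only if ν11 = ν22 and |β12| = 1. -/
open Real
open MeasureTheory Set

lemma cast_integrand {p q x : ℝ} (hx : x ∈ Ioo (0:ℝ) 1) :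
    (x:ℂ) ^ ((p:ℂ) - 1) * (1 - (x:ℂ)) ^ ((q:ℂ) - 1)
      = ((x ^ (p - 1) * (1 - x) ^ (q - 1) : ℝ) : ℂ) := by
  have hx0 : (0:ℝ) < x := hx.1
  have hx1 : (0:ℝ) < 1 - x := by linarith [hx.2]
  rw [show ((p:ℂ) - 1) = ((p - 1 : ℝ) : ℂ) by push_cast; ring,
    show ((q:ℂ) - 1) = ((q - 1 : ℝ) : ℂ) by push_cast; ring,
    show (1 - (x:ℂ)) = ((1 - x : ℝ) : ℂ) by push_cast; ring,
    ← Complex.ofReal_cpow hx0.le, ← Complex.ofReal_cpow hx1.le]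
  push_cast
  ring

/-- The real Beta integrand is integrable on `Ioo 0 1`. -/
lemma realBeta_integrable {p q : ℝ} (hp : 0 < p) (hq : 0 < q) :
    IntegrableOn (fun x : ℝ => x ^ (p - 1) * (1 - x) ^ (q - 1)) (Ioo 0 1) := by
  have h := (Complex.betaIntegral_convergent (u := (p : ℂ)) (v := (q : ℂ))
      (by simpa using hp) (by simpa using hq))
  rw [intervalIntegrable_iff_integrableOn_Ioc_of_le zero_le_one] at h
  have h2 : IntegrableOn (fun x : ℝ =>
      (x : ℂ) ^ ((p : ℂ) - 1) * (1 - (x : ℂ)) ^ ((q : ℂ) - 1)) (Ioo 0 1) :=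
    h.mono_set Ioo_subset_Ioc_self
  refine h2.norm.congr ?_
  refine (ae_restrict_iff' measurableSet_Ioo).2 (Filter.Eventually.of_forall fun x hx => ?_)
  dsimp only
  rw [cast_integrand hx, Complex.norm_real]
  have hx0 : (0:ℝ) < x := hx.1
  have hx1 : (0:ℝ) < 1 - x := by linarith [hx.2]
  exact norm_of_nonneg (by positivity)

/-- Value of the real Beta integral. -/
lemma realBeta_eq {p q : ℝ} (hp : 0 < p) (hq : 0 < q) :
    ∫ x in Ioo (0:ℝ) 1, x ^ (p - 1) * (1 - x) ^ (q - 1)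
      = Real.Gamma p * Real.Gamma q / Real.Gamma (p + q) := by
  have key := Complex.Gamma_mul_Gamma_eq_betaIntegral (s := (p : ℂ)) (t := (q : ℂ))
      (by simpa using hp) (by simpa using hq)
  have hbeta : Complex.betaIntegral (p : ℂ) (q : ℂ)
      = ((∫ x in Ioo (0:ℝ) 1, x ^ (p - 1) * (1 - x) ^ (q - 1) : ℝ) : ℂ) := by
    rw [Complex.betaIntegral, intervalIntegral.integral_of_le zero_le_one,
      integral_Ioc_eq_integral_Ioo,
      setIntegral_congr_fun measurableSet_Ioo (fun x hx => cast_integrand hx)]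
    exact integral_ofReal
  rw [hbeta, Complex.Gamma_ofReal, Complex.Gamma_ofReal, ← Complex.ofReal_add,
    Complex.Gamma_ofReal, ← Complex.ofReal_mul, ← Complex.ofReal_mul] at key
  have hkey := Complex.ofReal_injective key
  have hG : Real.Gamma (p + q) ≠ 0 := (Real.Gamma_pos_of_pos (by linarith)).ne'
  field_simp [hkey]
  rw [hkey]; ring

open scoped RealInnerProductSpace in
lemma beta_cs {a b c : ℝ} (ha : 0 < a) (hb : 0 < b) (hc : 0 < c) :
    (∫ x in Ioo (0:ℝ) 1, x ^ ((a + b) / 2 - 1) * (1 - x) ^ (c - 1))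
      ≤ Real.sqrt ((∫ x in Ioo (0:ℝ) 1, x ^ (a - 1) * (1 - x) ^ (c - 1)) *
          (∫ x in Ioo (0:ℝ) 1, x ^ (b - 1) * (1 - x) ^ (c - 1))) ∧
    ((∫ x in Ioo (0:ℝ) 1, x ^ ((a + b) / 2 - 1) * (1 - x) ^ (c - 1))
      = Real.sqrt ((∫ x in Ioo (0:ℝ) 1, x ^ (a - 1) * (1 - x) ^ (c - 1)) *
          (∫ x in Ioo (0:ℝ) 1, x ^ (b - 1) * (1 - x) ^ (c - 1))) → a = b) := by
  set μ := volume.restrict (Ioo (0:ℝ) 1) with hμ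
  set f : ℝ → ℝ → ℝ := fun p x => x ^ ((p - 1) / 2) * (1 - x) ^ ((c - 1) / 2) with hf
  have hsq : ∀ p q : ℝ, ∀ x ∈ Ioo (0:ℝ) 1,
      f p x * f q x = x ^ ((p + q) / 2 - 1) * (1 - x) ^ (c - 1) := by
    intro p q x hx
    have hx0 : (0:ℝ) < x := hx.1
    have hx1 : (0:ℝ) < 1 - x := by linarith [hx.2]
    simp only [hf]
    rw [show ((p + q) / 2 - 1) = (p - 1) / 2 + (q - 1) / 2 by ring,
      show (c - 1 : ℝ) = (c - 1) / 2 + (c - 1) / 2 by ring,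
      Real.rpow_add hx0, Real.rpow_add hx1]
    ring_nf
  have hmeas : ∀ p : ℝ, AEStronglyMeasurable (f p) μ := fun p =>
    (by fun_prop : Measurable fun x : ℝ => x ^ ((p - 1) / 2) * (1 - x) ^ ((c - 1) / 2)).aestronglyMeasurable
  have hmem : ∀ p : ℝ, 0 < p → MemLp (f p) 2 μ := by
    intro p hp
    rw [memLp_two_iff_integrable_sq (hmeas p)]
    refine (realBeta_integrable hp hc).congr ?_
    refine (ae_restrict_iff' measurableSet_Ioo).2 (Filter.Eventually.of_forall fun x hx => ?_)
    have := hsq p p x hx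
    rw [show ((p + p) / 2 - 1) = p - 1 by ring] at this
    dsimp only
    rw [sq, this]
  set F := (hmem a ha).toLp (f a) with hF
  set G := (hmem b hb).toLp (f b) with hG
  have hinner : ∀ (p q : ℝ) (hp : 0 < p) (hq : 0 < q),
      ⟪(hmem p hp).toLp (f p), (hmem q hq).toLp (f q)⟫
        = ∫ x in Ioo (0:ℝ) 1, x ^ ((p + q) / 2 - 1) * (1 - x) ^ (c - 1) := by
    intro p q hp hq
    rw [L2.inner_def]
    refine integral_congr_ae ?_
    filter_upwards [(hmem p hp).coeFn_toLp, (hmem q hq).coeFn_toLp,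
      ae_restrict_mem measurableSet_Ioo] with x h1 h2 h3
    rw [RCLike.inner_apply, starRingEnd_apply, star_trivial, h1, h2, mul_comm, hsq p q x h3]
  have hBa_pos : 0 < ∫ x in Ioo (0:ℝ) 1, x ^ (a - 1) * (1 - x) ^ (c - 1) := by
    rw [realBeta_eq ha hc]
    have g1 := Real.Gamma_pos_of_pos ha
    have g2 := Real.Gamma_pos_of_pos hc
    have g3 := Real.Gamma_pos_of_pos (show (0:ℝ) < a + c by linarith)
    positivity
  have hBb_pos : 0 < ∫ x in Ioo (0:ℝ) 1, x ^ (b - 1) * (1 - x) ^ (c - 1) := by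
    rw [realBeta_eq hb hc]
    have g1 := Real.Gamma_pos_of_pos hb
    have g2 := Real.Gamma_pos_of_pos hc
    have g3 := Real.Gamma_pos_of_pos (show (0:ℝ) < b + c by linarith)
    positivity
  have hFa : ⟪F, F⟫ = ∫ x in Ioo (0:ℝ) 1, x ^ (a - 1) * (1 - x) ^ (c - 1) := by
    rw [hinner a a ha ha, show ((a + a) / 2 - 1) = a - 1 by ring]
  have hGb : ⟪G, G⟫ = ∫ x in Ioo (0:ℝ) 1, x ^ (b - 1) * (1 - x) ^ (c - 1) := by
    rw [hinner b b hb hb, show ((b + b) / 2 - 1) = b - 1 by ring]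
  have hnF : ‖F‖ = Real.sqrt (∫ x in Ioo (0:ℝ) 1, x ^ (a - 1) * (1 - x) ^ (c - 1)) := by
    rw [← hFa, real_inner_self_eq_norm_sq, Real.sqrt_sq (norm_nonneg _)]
  have hnG : ‖G‖ = Real.sqrt (∫ x in Ioo (0:ℝ) 1, x ^ (b - 1) * (1 - x) ^ (c - 1)) := by
    rw [← hGb, real_inner_self_eq_norm_sq, Real.sqrt_sq (norm_nonneg _)]
  have hprod : ‖F‖ * ‖G‖ = Real.sqrt
      ((∫ x in Ioo (0:ℝ) 1, x ^ (a - 1) * (1 - x) ^ (c - 1)) *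
        (∫ x in Ioo (0:ℝ) 1, x ^ (b - 1) * (1 - x) ^ (c - 1))) := by
    rw [hnF, hnG, Real.sqrt_mul hBa_pos.le]
  constructor
  · rw [← hinner a b ha hb, ← hprod]
    exact real_inner_le_norm F G
  · intro heq
    rw [← hinner a b ha hb, ← hprod] at heq
    rw [inner_eq_norm_mul_iff_real] at heq
    by_contra hab
    have he : (a - b) / 2 ≠ 0 := by
      intro h; apply hab; linarith [ (div_eq_zero_iff.1 h).resolve_right (by norm_num) ]
    have hFpos : 0 < ‖F‖ := by rw [hnF]; exact Real.sqrt_pos.2 hBa_pos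
    have hGpos : 0 < ‖G‖ := by rw [hnG]; exact Real.sqrt_pos.2 hBb_pos
    set T : Set ℝ := Ioo 0 1 ∩ {x : ℝ | ‖G‖ * x ^ ((a - b) / 2) = ‖F‖} with hT
    have hTsub : T.Subsingleton := by
      rintro x ⟨hxI, hxE⟩ y ⟨hyI, hyE⟩
      have hxe : x ^ ((a - b) / 2) = y ^ ((a - b) / 2) := by
        have := hxE.trans hyE.symm
        exact mul_left_cancel₀ hGpos.ne' this
      have hlog : ((a - b) / 2) * Real.log x = ((a - b) / 2) * Real.log y := by
        rw [← Real.log_rpow hxI.1, ← Real.log_rpow hyI.1, hxe]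
      exact Real.log_injOn_pos (mem_Ioi.2 hxI.1) (mem_Ioi.2 hyI.1)
        (mul_left_cancel₀ he hlog)
    have hT0 : μ T = 0 := hTsub.measure_zero μ
    have haeT : ∀ᵐ x ∂μ, x ∈ T := by
      have hsmul1 : (↑(‖G‖ • F) : ℝ → ℝ) =ᵐ[μ] ‖G‖ • (f a) :=
        (Lp.coeFn_smul _ _).trans ((hmem a ha).coeFn_toLp.mono fun x hx => by
          simp [hF, hx])
      have hsmul2 : (↑(‖F‖ • G) : ℝ → ℝ) =ᵐ[μ] ‖F‖ • (f b) :=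
        (Lp.coeFn_smul _ _).trans ((hmem b hb).coeFn_toLp.mono fun x hx => by
          simp [hG, hx])
      have hae : ‖G‖ • (f a) =ᵐ[μ] ‖F‖ • (f b) := by
        refine hsmul1.symm.trans ?_
        rw [heq]
        exact hsmul2
      filter_upwards [hae, ae_restrict_mem measurableSet_Ioo] with x hx hxI
      refine ⟨hxI, ?_⟩
      have hx0 : (0:ℝ) < x := hxI.1
      have hw : (0:ℝ) < (1 - x) ^ ((c - 1) / 2) := by
        have : (0:ℝ) < 1 - x := by linarith [hxI.2]
        positivity
      have hxb : (0:ℝ) < x ^ ((b - 1) / 2) := Real.rpow_pos_of_pos hx0 _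
      have hx' : ‖G‖ * (x ^ ((a - 1) / 2) * (1 - x) ^ ((c - 1) / 2))
          = ‖F‖ * (x ^ ((b - 1) / 2) * (1 - x) ^ ((c - 1) / 2)) := by
        have h := hx
        simp only [Pi.smul_apply, smul_eq_mul, hf] at h
        exact h
      have h1 : ‖G‖ * x ^ ((a - 1) / 2) = ‖F‖ * x ^ ((b - 1) / 2) :=
        mul_right_cancel₀ hw.ne' (by linear_combination hx')
      have h2 : x ^ ((a - 1) / 2) = x ^ ((b - 1) / 2) * x ^ ((a - b) / 2) := by
        rw [← Real.rpow_add hx0, show (b - 1) / 2 + (a - b) / 2 = (a - 1) / 2 by ring]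
      rw [h2] at h1
      exact mul_right_cancel₀ hxb.ne' (by linear_combination h1)
    have hcompl : μ Tᶜ = 0 := by
      simpa [Set.compl_def] using (MeasureTheory.ae_iff.1 haeT)
    have huniv : μ Set.univ = 0 := by
      have h1 : μ Set.univ ≤ μ T + μ Tᶜ := by
        rw [← Set.union_compl_self T]; exact measure_union_le _ _
      rw [hT0, hcompl, add_zero] at h1
      exact le_antisymm h1 zero_le
    rw [hμ, Measure.restrict_apply_univ, Real.volume_Ioo] at huniv
    norm_num at huniv

lemma gamma_key {a b c : ℝ} (ha : 0 < a) (hb : 0 < b) (hc : 0 < c) :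
    (0 < Real.sqrt (Real.Gamma (a + c)) / Real.sqrt (Real.Gamma a) *
        (Real.sqrt (Real.Gamma (b + c)) / Real.sqrt (Real.Gamma b)) *
        (Real.Gamma ((a + b) / 2) / Real.Gamma ((a + b) / 2 + c))) ∧
    Real.sqrt (Real.Gamma (a + c)) / Real.sqrt (Real.Gamma a) *
        (Real.sqrt (Real.Gamma (b + c)) / Real.sqrt (Real.Gamma b)) *
        (Real.Gamma ((a + b) / 2) / Real.Gamma ((a + b) / 2 + c)) ≤ 1 ∧
    (Real.sqrt (Real.Gamma (a + c)) / Real.sqrt (Real.Gamma a) *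
        (Real.sqrt (Real.Gamma (b + c)) / Real.sqrt (Real.Gamma b)) *
        (Real.Gamma ((a + b) / 2) / Real.Gamma ((a + b) / 2 + c)) = 1 → a = b) := by
  have hm : 0 < (a + b) / 2 := by linarith
  have hGa := Real.Gamma_pos_of_pos ha
  have hGb := Real.Gamma_pos_of_pos hb
  have hGc := Real.Gamma_pos_of_pos hc
  have hGac := Real.Gamma_pos_of_pos (show (0:ℝ) < a + c by linarith)
  have hGbc := Real.Gamma_pos_of_pos (show (0:ℝ) < b + c by linarith)
  have hGm := Real.Gamma_pos_of_pos hm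
  have hGmc := Real.Gamma_pos_of_pos (show (0:ℝ) < (a + b) / 2 + c by linarith)
  set Ba := Real.Gamma a * Real.Gamma c / Real.Gamma (a + c) with hBa
  set Bb := Real.Gamma b * Real.Gamma c / Real.Gamma (b + c) with hBb
  set Bm := Real.Gamma ((a + b) / 2) * Real.Gamma c / Real.Gamma ((a + b) / 2 + c) with hBm
  have hBa_pos : 0 < Ba := by positivity
  have hBb_pos : 0 < Bb := by positivity
  have hBm_pos : 0 < Bm := by positivity
  have hcs := beta_cs ha hb hc
  rw [realBeta_eq hm hc, realBeta_eq ha hc, realBeta_eq hb hc] at hcs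
  set X := Real.sqrt (Real.Gamma (a + c)) / Real.sqrt (Real.Gamma a) *
      (Real.sqrt (Real.Gamma (b + c)) / Real.sqrt (Real.Gamma b)) *
      (Real.Gamma ((a + b) / 2) / Real.Gamma ((a + b) / 2 + c)) with hX
  have hXpos : 0 < X := by
    rw [hX]; positivity
  have hsqrt_pos : 0 < Real.sqrt (Ba * Bb) := Real.sqrt_pos.2 (by positivity)
  have hXeq : X = Bm / Real.sqrt (Ba * Bb) := by
    have hsq : X ^ 2 = (Bm / Real.sqrt (Ba * Bb)) ^ 2 := by
      rw [hX, div_pow Bm, Real.sq_sqrt (by positivity : (0:ℝ) ≤ Ba * Bb)]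
      rw [mul_pow, mul_pow, div_pow, div_pow, div_pow,
        Real.sq_sqrt hGac.le, Real.sq_sqrt hGa.le, Real.sq_sqrt hGbc.le, Real.sq_sqrt hGb.le,
        hBa, hBb, hBm]
      field_simp
    calc X = Real.sqrt (X ^ 2) := (Real.sqrt_sq hXpos.le).symm
      _ = Real.sqrt ((Bm / Real.sqrt (Ba * Bb)) ^ 2) := by rw [hsq]
      _ = Bm / Real.sqrt (Ba * Bb) := Real.sqrt_sq (by positivity)
  refine ⟨hXpos, ?_, ?_⟩
  · rw [hXeq, div_le_one hsqrt_pos]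
    exact hcs.1
  · intro h1
    rw [hXeq, div_eq_one_iff_eq hsqrt_pos.ne'] at h1
    exact hcs.2 h1


/-- In the parsimonious bivariate Matérn model, the constraint on the colocated
cross-correlation `ρ₁₂` implies `|ρ₁₂| ≤ 1`, with `|ρ₁₂| = 1` only if `ν₁₁ = ν₂₂`
and `|β₁₂| = 1`. -/
theorem parsimonious_matern_correlation_bound
    (ν₁₁ ν₂₂ : ℝ) (hν₁₁ : 0 < ν₁₁) (hν₂₂ : 0 < ν₂₂)
    (d : ℕ) (hd : 1 ≤ d)
    (β₁₂ : ℝ) (hβ : |β₁₂| ≤ 1)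
    (ν₁₂ : ℝ) (hν₁₂ : ν₁₂ = (ν₁₁ + ν₂₂) / 2)
    (ρ₁₂ : ℝ)
    (hρ : ρ₁₂ = β₁₂ *
      (Real.sqrt (Real.Gamma (ν₁₁ + d / 2)) / Real.sqrt (Real.Gamma ν₁₁)) *
      (Real.sqrt (Real.Gamma (ν₂₂ + d / 2)) / Real.sqrt (Real.Gamma ν₂₂)) *
      (Real.Gamma ν₁₂ / Real.Gamma (ν₁₂ + d / 2))) :
    |ρ₁₂| ≤ 1 ∧ (|ρ₁₂| = 1 → ν₁₁ = ν₂₂ ∧ |β₁₂| = 1) := by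
  have hc : 0 < (d : ℝ) / 2 := by
    have : (1:ℝ) ≤ (d : ℝ) := by exact_mod_cast hd
    linarith
  subst hν₁₂
  obtain ⟨hXpos, hXle, hXeq⟩ := gamma_key hν₁₁ hν₂₂ hc
  set X := Real.sqrt (Real.Gamma (ν₁₁ + ↑d / 2)) / Real.sqrt (Real.Gamma ν₁₁) *
      (Real.sqrt (Real.Gamma (ν₂₂ + ↑d / 2)) / Real.sqrt (Real.Gamma ν₂₂)) *
      (Real.Gamma ((ν₁₁ + ν₂₂) / 2) / Real.Gamma ((ν₁₁ + ν₂₂) / 2 + ↑d / 2)) with hXdef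
  have habs : |ρ₁₂| = |β₁₂| * X := by
    rw [hρ, show β₁₂ *
      (Real.sqrt (Real.Gamma (ν₁₁ + ↑d / 2)) / Real.sqrt (Real.Gamma ν₁₁)) *
      (Real.sqrt (Real.Gamma (ν₂₂ + ↑d / 2)) / Real.sqrt (Real.Gamma ν₂₂)) *
      (Real.Gamma ((ν₁₁ + ν₂₂) / 2) / Real.Gamma ((ν₁₁ + ν₂₂) / 2 + ↑d / 2)) = β₁₂ * X by
        rw [hXdef]; ring, abs_mul, abs_of_pos hXpos]
  constructor
  · rw [habs]
    exact mul_le_one₀ hβ hXpos.le hXle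
  · intro h1
    rw [habs] at h1
    have hX1 : X = 1 := by
      have h2 : |β₁₂| * X ≤ X := by
        calc |β₁₂| * X ≤ 1 * X := by
              exact mul_le_mul_of_nonneg_right hβ hXpos.le
          _ = X := one_mul X
      linarith [h1 ▸ h2, hXle]
    have hβ1 : |β₁₂| = 1 := by
      rw [hX1, mul_one] at h1
      exact h1
    exact ⟨hXeq hX1, hβ1⟩
end

section
/- Among all real symmetric matrices, the matrix Q Λ⁺ Q^T, where Λ⁺ replaces negative eigenvalues of Σ = Q Λ Q^T by zero, is a closest positive semidefinite matrix to Σ in the Frobenius norm: for every positive semidefinite symmetric matrix P, ‖Σ − Q Λ⁺ Q^T‖_F ≤ ‖Σ − P‖_F. -/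
open Matrix

/-- The Frobenius norm of a real square matrix. -/
noncomputable def frobNorm {n : ℕ} (A : Matrix (Fin n) (Fin n) ℝ) : ℝ :=
  Real.sqrt (∑ i : Fin n, ∑ j : Fin n, (A i j) ^ 2)

lemma frobSq_eq_trace {n : ℕ} (M : Matrix (Fin n) (Fin n) ℝ) :
    (∑ i : Fin n, ∑ j : Fin n, (M i j) ^ 2) = Matrix.trace (Mᵀ * M) := by
  rw [Matrix.trace]
  simp only [Matrix.diag, Matrix.mul_apply, Matrix.transpose_apply, sq]
  exact Finset.sum_comm

lemma frobSq_conj {n : ℕ} (Q M : Matrix (Fin n) (Fin n) ℝ)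
    (hQ₂ : Qᵀ * Q = 1) :
    (∑ i : Fin n, ∑ j : Fin n, ((Q * M * Qᵀ) i j) ^ 2) =
      ∑ i : Fin n, ∑ j : Fin n, (M i j) ^ 2 := by
  rw [frobSq_eq_trace, frobSq_eq_trace]
  have : (Q * M * Qᵀ)ᵀ * (Q * M * Qᵀ) = Q * (Mᵀ * M) * Qᵀ := by
    simp only [Matrix.transpose_mul, Matrix.transpose_transpose, Matrix.mul_assoc]
    rw [← Matrix.mul_assoc Qᵀ Q, hQ₂, Matrix.one_mul]
  rw [this]
  rw [Matrix.trace_mul_comm, ← Matrix.mul_assoc, ← Matrix.mul_assoc, hQ₂, Matrix.one_mul]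

/-- Setting negative eigenvalues to zero yields a closest positive semidefinite matrix
in the Frobenius norm: if `Σ = Q Λ Qᵀ` is symmetric with `Q` orthogonal and `Λ⁺`
replaces the negative diagonal entries of `Λ` by `0`, then for every positive
semidefinite symmetric `P`, `‖Σ − Q Λ⁺ Qᵀ‖_F ≤ ‖Σ − P‖_F`. -/
theorem nearest_posSemidef_frobenius
    {n : ℕ} (A Q : Matrix (Fin n) (Fin n) ℝ) (lam : Fin n → ℝ)
    (hQ₁ : Q * Qᵀ = 1) (hQ₂ : Qᵀ * Q = 1)
    (hA : A.IsSymm) (hdecomp : A = Q * Matrix.diagonal lam * Qᵀ)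
    (P : Matrix (Fin n) (Fin n) ℝ) (hPsymm : P.IsSymm) (hP : P.PosSemidef) :
    frobNorm (A - Q * Matrix.diagonal (fun i => max (lam i) 0) * Qᵀ) ≤
      frobNorm (A - P) := by
  set B := Qᵀ * P * Q with hB
  have hBpsd : B.PosSemidef := by
    have : B = Qᵀ * P * (Qᵀ)ᴴ := by
      simp [hB, Matrix.conjTranspose, Matrix.transpose_transpose]
      rfl
    rw [this]
    exact hP.mul_mul_conjTranspose_same Qᵀ
  have hBdiag : ∀ i, 0 ≤ B i i := fun i => by
    exact hBpsd.diag_nonneg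
  -- rewrite both differences as conjugations
  have h1 : A - Q * Matrix.diagonal (fun i => max (lam i) 0) * Qᵀ
      = Q * (Matrix.diagonal lam - Matrix.diagonal (fun i => max (lam i) 0)) * Qᵀ := by
    rw [hdecomp]; noncomm_ring
  have h2 : A - P = Q * (Matrix.diagonal lam - B) * Qᵀ := by
    rw [hdecomp, hB]
    rw [Matrix.mul_sub, Matrix.sub_mul]
    congr 1
    have key : Q * (Qᵀ * P * Q) * Qᵀ = P := by
      simp only [Matrix.mul_assoc]
      rw [← Matrix.mul_assoc Q Qᵀ, hQ₁, Matrix.one_mul, Matrix.mul_one]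
    exact key.symm
  rw [h1, h2]
  unfold frobNorm
  rw [frobSq_conj Q _ hQ₂, frobSq_conj Q _ hQ₂]
  apply Real.sqrt_le_sqrt
  have hL : ∑ i : Fin n, ∑ j : Fin n,
      ((Matrix.diagonal lam - Matrix.diagonal (fun i => max (lam i) 0)) i j) ^ 2
      = ∑ i : Fin n, (lam i - max (lam i) 0) ^ 2 := by
    apply Finset.sum_congr rfl
    intro i _
    rw [Finset.sum_eq_single i]
    · simp [Matrix.diagonal]
    · intro j _ hj
      simp [Matrix.diagonal, (Ne.symm hj)]
    · simp
  rw [hL]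
  have hR : ∑ i : Fin n, ((Matrix.diagonal lam - B) i i) ^ 2 ≤
      ∑ i : Fin n, ∑ j : Fin n, ((Matrix.diagonal lam - B) i j) ^ 2 := by
    apply Finset.sum_le_sum
    intro i _
    have := Finset.single_le_sum (f := fun j => ((Matrix.diagonal lam - B) i j) ^ 2)
      (fun j _ => sq_nonneg _) (Finset.mem_univ i)
    exact this
  refine le_trans (Finset.sum_le_sum ?_) hR
  intro i _
  simp only [Matrix.sub_apply, Matrix.diagonal_apply_eq]
  rcases le_or_gt 0 (lam i) with h | h
  · simp [max_eq_left h]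
    positivity
  · rw [max_eq_right h.le]
    have : lam i - B i i ≤ lam i - 0 := by linarith [hBdiag i]
    have h2 : (lam i - B i i) ^ 2 ≥ (lam i - 0) ^ 2 := by
      nlinarith [hBdiag i]
    simpa using h2
end
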